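/- Let X be a reflexive real Banach space and T a compact linear operator from X to X with operator norm 1 that is a right-symmetric point of the space of compact operators on X (with the operator norm), with M_T = {x₀, −x₀} for some unit vector x₀ ∈ X. Suppose T is left orthogonality preserving at x₀. If x₀ is an eigenvector of T, then x₀ is both a left-symmetric and a right-symmetric point of X. -/

import Mathlib

/-- Birkhoff–James orthogonality: `x ⊥_B y` iff `‖x + λ • y‖ ≥ ‖x‖` for every real `λ`. -/
def BJOrth {E : Type*} [NormedAddCommGroup E] [NormedSpace ℝ E] (x y : E) : Prop :=
  ∀ lam : ℝ, ‖x‖ ≤ ‖x + lam • y‖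

/-- `x` is a left-symmetric point: `x ⊥_B y` implies `y ⊥_B x` for all `y`. -/
def LeftSymmetricPt {E : Type*} [NormedAddCommGroup E] [NormedSpace ℝ E] (x : E) : Prop :=
  ∀ y : E, BJOrth x y → BJOrth y x

/-- `x` is a right-symmetric point: `y ⊥_B x` implies `x ⊥_B y` for all `y`. -/
def RightSymmetricPt {E : Type*} [NormedAddCommGroup E] [NormedSpace ℝ E] (x : E) : Prop :=
  ∀ y : E, BJOrth y x → BJOrth x y

/-- A nonzero `x` is a smooth point if there is exactly one norm-one continuous linear
functional `f` with `f x = ‖x‖`. -/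
def SmoothPoint {E : Type*} [NormedAddCommGroup E] [NormedSpace ℝ E] (x : E) : Prop :=
  ∃! f : E →L[ℝ] ℝ, ‖f‖ = 1 ∧ f x = ‖x‖

/-- A normed space is reflexive if the canonical embedding into the double dual is onto. -/
def ReflexiveSpace (E : Type*) [NormedAddCommGroup E] [NormedSpace ℝ E] : Prop :=
  Function.Surjective (NormedSpace.inclusionInDoubleDual ℝ E)

/-- `T` (a compact operator) is a right-symmetric point of the space of compact operators
(with the operator norm): `A ⊥_B T` implies `T ⊥_B A` for every compact operator `A`. -/
def RightSymmetricCompactOp {X Y : Type*} [NormedAddCommGroup X] [NormedSpace ℝ X]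
    [NormedAddCommGroup Y] [NormedSpace ℝ Y] (T : X →L[ℝ] Y) : Prop :=
  ∀ A : X →L[ℝ] Y, IsCompactOperator A → BJOrth A T → BJOrth T A

/-- `T` is left orthogonality preserving at `x`: `x ⊥_B y` implies `T x ⊥_B T y`. -/
def LeftOPAt {X Y : Type*} [NormedAddCommGroup X] [NormedSpace ℝ X]
    [NormedAddCommGroup Y] [NormedSpace ℝ Y] (T : X →L[ℝ] Y) (x : X) : Prop :=
  ∀ y : X, BJOrth x y → BJOrth (T x) (T y)

/-- Approximate Birkhoff–James orthogonality in the sense of Dragomir–Chmieliński: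
`x ⊥_D^ε y` iff `‖x + λ • y‖ ≥ √(1 - ε²) * ‖x‖` for every real `λ`. -/
def ApproxOrthD {E : Type*} [NormedAddCommGroup E] [NormedSpace ℝ E]
    (ε : ℝ) (x y : E) : Prop :=
  ∀ lam : ℝ, Real.sqrt (1 - ε ^ 2) * ‖x‖ ≤ ‖x + lam • y‖

/-- Approximate Birkhoff–James orthogonality in the sense of Chmieliński:
`x ⊥_B^ε y` iff `‖x + λ • y‖² ≥ ‖x‖² - 2ε‖x‖‖λ • y‖` for every real `λ`. -/
def ApproxOrthC {E : Type*} [NormedAddCommGroup E] [NormedSpace ℝ E]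
    (ε : ℝ) (x y : E) : Prop :=
  ∀ lam : ℝ, ‖x‖ ^ 2 - 2 * ε * ‖x‖ * ‖lam • y‖ ≤ ‖x + lam • y‖ ^ 2


section Auxiliary

open NormedSpace Metric Set
set_option maxHeartbeats 2000000

namespace SymmAux

variable {X : Type*} [NormedAddCommGroup X] [NormedSpace ℝ X]

lemma claimA (u v : X) (c a t : ℝ) (ha : 0 < a) (hat : a ≤ t) (hu : ‖u‖ ≤ c)
    (hav : c ≤ ‖u + a • v‖) : c ≤ ‖u + t • v‖ := by
  have ht : 0 < t := lt_of_lt_of_le ha hat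
  set s := a / t with hs
  have hs0 : 0 < s := div_pos ha ht
  have hs1 : s ≤ 1 := (div_le_one ht).2 hat
  have key : u + a • v = (1 - s) • u + s • (u + t • v) := by
    rw [smul_add, sub_smul, one_smul, smul_smul, hs, div_mul_cancel₀ a ht.ne']
    abel
  have h2 : ‖u + a • v‖ ≤ (1 - s) * ‖u‖ + s * ‖u + t • v‖ := by
    rw [key]
    refine (norm_add_le _ _).trans ?_
    rw [norm_smul, norm_smul, Real.norm_eq_abs, Real.norm_eq_abs,
      abs_of_nonneg (by linarith), abs_of_nonneg hs0.le]
  nlinarith [mul_nonneg (sub_nonneg.2 hs1) (sub_nonneg.2 hu)]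

lemma t2weak : T2Space (WeakSpace ℝ X) := by
  refine (WeakBilin.isEmbedding ?_).t2Space
  intro x y hxy
  refine (NormedSpace.eq_iff_forall_dual_eq ℝ).2 fun g => congrArg (fun F => F g) hxy

lemma key_prop (hX : ReflexiveSpace X)
    (T : X →L[ℝ] X) (hTc : IsCompactOperator T) (hT : ‖T‖ = 1)
    (x₀ : X) (hMT : {x : X | ‖x‖ = 1 ∧ ‖T x‖ = ‖T‖} = {x₀, -x₀})
    (A : X →L[ℝ] X) (hAc : IsCompactOperator A) (horth : BJOrth T A) :
    ∀ lam : ℝ, 1 ≤ ‖T x₀ + lam • A x₀‖ := by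
  classical
  have hx₀mem : x₀ ∈ {x : X | ‖x‖ = 1 ∧ ‖T x‖ = ‖T‖} := by
    rw [hMT]; exact Set.mem_insert _ _
  obtain ⟨hx₀, hTx₀⟩ := hx₀mem
  rw [hT] at hTx₀
  have hsurj : Function.Surjective ⇑(inclusionInDoubleDualLi ℝ (E := X)) := hX
  let e : X ≃ₗᵢ[ℝ] StrongDual ℝ (StrongDual ℝ X) := LinearIsometryEquiv.ofSurjective _ hsurj
  let π : WeakDual ℝ (StrongDual ℝ X) → X := fun z => e.symm (WeakDual.toStrongDual z)
  have hπnorm : ∀ z, ‖π z‖ = ‖WeakDual.toStrongDual z‖ := fun z => e.symm.norm_map _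
  have hπeval : ∀ (z : WeakDual ℝ (StrongDual ℝ X)) (g : StrongDual ℝ X), g (π z) = z g := by
    intro z g
    have h1 : e (π z) = WeakDual.toStrongDual z := e.apply_symm_apply _
    have h2 : e (π z) g = g (π z) := rfl
    rw [h1] at h2; exact h2.symm
  set K : Set (WeakDual ℝ (StrongDual ℝ X)) := WeakDual.toStrongDual ⁻¹' closedBall 0 1 with hKdef
  have hKc : IsCompact K := WeakDual.isCompact_closedBall (𝕜 := ℝ) (E := StrongDual ℝ X) 0 1
  haveI : CompactSpace ↥K := isCompact_iff_compactSpace.mp hKc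
  have hKmem : ∀ z : ↥K, ‖π z.1‖ ≤ 1 := by
    intro z
    have h := z.2
    simp only [hKdef, Set.mem_preimage, mem_closedBall, dist_zero_right] at h
    rw [hπnorm]; exact (dist_zero_right (WeakDual.toStrongDual z.1)).symm.trans_le h
  have hζ : ∀ x : X, ‖x‖ ≤ 1 → ∃ z : ↥K, π z.1 = x := by
    intro x hx
    have hco : WeakDual.toStrongDual (StrongDual.toWeakDual (e x)) = e x := rfl
    refine ⟨⟨StrongDual.toWeakDual (e x), ?_⟩, ?_⟩
    · simp only [hKdef, Set.mem_preimage, mem_closedBall, dist_zero_right]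
      rw [hco]
      exact (dist_zero_right (e x)).trans_le (by rw [e.norm_map]; exact hx)
    · show e.symm (WeakDual.toStrongDual (StrongDual.toWeakDual (e x))) = x
      rw [hco, e.symm_apply_apply]
  haveI hT2 : T2Space (WeakSpace ℝ X) := t2weak
  -- continuity of compact operators from weak ball to norm topology
  have cont : ∀ (S : X →L[ℝ] X), IsCompactOperator ⇑S →
      Continuous (fun z : ↥K => S (π z.1)) := by
    intro S hS
    obtain ⟨C, hCcomp, hCsub⟩ :=
      IsCompactOperator.image_closedBall_subset_compact (f := (S : X →ₗ[ℝ] X)) hS 1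
    have hmem : ∀ z : ↥K, S (π z.1) ∈ C := fun z =>
      hCsub ⟨π z.1, by simpa [mem_closedBall, dist_zero_right] using hKmem z, rfl⟩
    haveI : CompactSpace ↥C := isCompact_iff_compactSpace.mp hCcomp
    have hjcont : Continuous (fun c : ↥C => toWeakSpaceCLM ℝ X c.1) :=
      (toWeakSpaceCLM ℝ X).continuous.comp continuous_subtype_val
    have hjinj : Function.Injective (fun c : ↥C => toWeakSpaceCLM ℝ X c.1) := by
      intro a b hab
      have : (toWeakSpace ℝ X) a.1 = toWeakSpace ℝ X b.1 := by
        simpa [toWeakSpaceCLM_eq_toWeakSpace] using hab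
      exact Subtype.ext ((toWeakSpace ℝ X).injective this)
    have hemb := hjcont.isClosedEmbedding hjinj
    have hFcont : Continuous (fun z : ↥K => (⟨S (π z.1), hmem z⟩ : ↥C)) := by
      rw [hemb.toIsEmbedding.toIsInducing.continuous_iff]
      apply WeakBilin.continuous_of_continuous_eval
      intro g
      have hkey : ∀ z : ↥K, z.1 (g.comp S) =
          ((topDualPairing ℝ X).flip
            ((fun z : ↥K => toWeakSpaceCLM ℝ X (S (π z.1))) z)) g := by
        intro z
        show z.1 (g.comp S) = g (S (π z.1))
        exact (hπeval z.1 (g.comp S)).symm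
      exact ((WeakBilin.eval_continuous (topDualPairing ℝ (StrongDual ℝ X)) (g.comp S)).comp
        continuous_subtype_val).congr hkey
    exact continuous_subtype_val.comp hFcont
  -- norm attainment
  have attain : ∀ (S : X →L[ℝ] X), IsCompactOperator ⇑S →
      ∃ x : X, ‖x‖ ≤ 1 ∧ ‖S‖ ≤ ‖S x‖ := by
    intro S hS
    haveI : Nonempty ↥K := ⟨⟨0, by simp [hKdef]⟩⟩
    obtain ⟨z₀, -, hmax⟩ :=
      isCompact_univ.exists_isMaxOn univ_nonempty ((cont S hS).norm.continuousOn)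
    refine ⟨π z₀.1, hKmem z₀, ?_⟩
    refine S.opNorm_le_bound (norm_nonneg _) fun x => ?_
    rcases eq_or_ne x 0 with rfl | hx
    · simp
    · have hxn : (0:ℝ) < ‖x‖ := norm_pos_iff.2 hx
      have hxx : ‖(‖x‖⁻¹ • x)‖ ≤ 1 := by
        rw [norm_smul, Real.norm_eq_abs, abs_of_pos (by positivity), inv_mul_cancel₀ hxn.ne']
      obtain ⟨z, hz⟩ := hζ _ hxx
      have h := hmax (mem_univ z)
      simp only [Set.mem_setOf_eq] at h
      rw [hz, map_smul, norm_smul, Real.norm_eq_abs, abs_of_pos (by positivity)] at h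
      calc ‖S x‖ = ‖x‖ * (‖x‖⁻¹ * ‖S x‖) := by field_simp
        _ ≤ ‖x‖ * ‖S (π z₀.1)‖ := by
            refine mul_le_mul_of_nonneg_left h hxn.le
        _ = ‖S (π z₀.1)‖ * ‖x‖ := mul_comm _ _
  -- main positive-side argument
  have pos : ∀ (B : X →L[ℝ] X), IsCompactOperator ⇑B → BJOrth T B →
      ∀ t : ℝ, 0 < t → 1 ≤ ‖T x₀ + t • B x₀‖ := by
    intro B hBc hBorth
    have main : ∀ t : ℝ, 0 < t → t ≤ 1 → 1 ≤ ‖T x₀ + t • B x₀‖ := by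
      set G : ℕ → Set ↥K := fun n =>
        {z | ∀ t : ℝ, 1/((n:ℝ)+1) ≤ t → t ≤ 1 → 1 ≤ ‖T (π z.1) + t • B (π z.1)‖} with hG
      have hBKcont := cont B hBc
      have hTKcont := cont T hTc
      have hGclosed : ∀ n, IsClosed (G n) := by
        intro n
        have hGeq : G n = ⋂ (t : ℝ) (_ : 1/((n:ℝ)+1) ≤ t) (_ : t ≤ 1),
            {z : ↥K | 1 ≤ ‖T (π z.1) + t • B (π z.1)‖} := by
          ext z; simp [hG, Set.mem_iInter]
        rw [hGeq]
        refine isClosed_iInter fun t => isClosed_iInter fun _ => isClosed_iInter fun _ => ?_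
        exact isClosed_le continuous_const ((hTKcont.add (hBKcont.const_smul t)).norm)
      have hGnonempty : ∀ n, (G n).Nonempty := by
        intro n
        have hcn : (0:ℝ) < 1/((n:ℝ)+1) := by positivity
        have hcompact : IsCompactOperator ⇑(T + (1/((n:ℝ)+1)) • B) := by
          rw [ContinuousLinearMap.coe_add', ContinuousLinearMap.coe_smul']
          exact hTc.add (hBc.smul _)
        obtain ⟨x, hx1, hx2⟩ := attain _ hcompact
        have hTB : (1:ℝ) ≤ ‖(T + (1/((n:ℝ)+1)) • B) x‖ := by
          have h6 := hBorth (1/((n:ℝ)+1))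
          rw [hT] at h6
          exact h6.trans hx2
        obtain ⟨z, hz⟩ := hζ x hx1
        refine ⟨z, fun t ht1 ht2 => ?_⟩
        rw [hz]
        have happ : (T + (1/((n:ℝ)+1)) • B) x = T x + (1/((n:ℝ)+1)) • B x := by
          simp [ContinuousLinearMap.add_apply, ContinuousLinearMap.smul_apply]
        have hTB' := hTB
        rw [happ] at hTB'
        refine claimA (T x) (B x) 1 (1/((n:ℝ)+1)) t hcn ht1 ?_ hTB'
        calc ‖T x‖ ≤ ‖T‖ * ‖x‖ := T.le_opNorm x
          _ ≤ 1 := by rw [hT, one_mul]; exact hx1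
      have hGsub : ∀ n, G (n+1) ⊆ G n := by
        intro n z hzmem t ht1 ht2
        refine hzmem t (le_trans ?_ ht1) ht2
        have h1 : ((n:ℝ)+1) ≤ ((n:ℝ)+1+1) := by linarith
        have := one_div_le_one_div_of_le (by positivity : (0:ℝ) < (n:ℝ)+1) h1
        push_cast
        linarith
      obtain ⟨zlim, hzlim⟩ := IsCompact.nonempty_iInter_of_sequence_nonempty_isCompact_isClosed
        G hGsub hGnonempty ((hGclosed 0).isCompact) hGclosed
      rw [Set.mem_iInter] at hzlim
      have hbar : ∀ t : ℝ, 0 < t → t ≤ 1 → 1 ≤ ‖T (π zlim.1) + t • B (π zlim.1)‖ := by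
        intro t ht ht1
        obtain ⟨n, hn⟩ := exists_nat_gt (1/t)
        refine hzlim n t ?_ ht1
        rw [div_le_iff₀ (by positivity)]
        have h1 : 1/t < (n:ℝ)+1 := lt_of_lt_of_le hn (by linarith)
        rw [div_lt_iff₀ ht] at h1
        nlinarith
      have hTxbar : 1 ≤ ‖T (π zlim.1)‖ := by
        refine le_of_forall_pos_le_add fun ε hε => ?_
        set t := min 1 (ε / (‖B (π zlim.1)‖ + 1)) with htdef
        have ht0 : 0 < t := lt_min one_pos (by positivity)
        have ht1 : t ≤ 1 := min_le_left _ _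
        have hb := hbar t ht0 ht1
        have h2 : ‖T (π zlim.1) + t • B (π zlim.1)‖ ≤ ‖T (π zlim.1)‖ + t * ‖B (π zlim.1)‖ := by
          refine (norm_add_le _ _).trans ?_
          rw [norm_smul, Real.norm_eq_abs, abs_of_pos ht0]
        have h3 : t * ‖B (π zlim.1)‖ ≤ ε := by
          have h4 : t ≤ ε / (‖B (π zlim.1)‖ + 1) := min_le_right _ _
          rw [le_div_iff₀ (by positivity)] at h4
          nlinarith [norm_nonneg (B (π zlim.1))]
        linarith
      have hxbar_le : ‖π zlim.1‖ ≤ 1 := hKmem zlim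
      have h5 : ‖T (π zlim.1)‖ ≤ ‖π zlim.1‖ := by
        calc ‖T (π zlim.1)‖ ≤ ‖T‖ * ‖π zlim.1‖ := T.le_opNorm _
          _ = ‖π zlim.1‖ := by rw [hT, one_mul]
      have hxbar1 : ‖π zlim.1‖ = 1 := le_antisymm hxbar_le (le_trans hTxbar h5)
      have hTxbar1 : ‖T (π zlim.1)‖ = ‖T‖ := by
        rw [hT]
        exact le_antisymm (hxbar1 ▸ h5) hTxbar
      have hmem2 : π zlim.1 ∈ ({x₀, -x₀} : Set X) := by
        rw [← hMT]; exact ⟨hxbar1, hTxbar1⟩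
      intro t ht ht1
      rcases hmem2 with h | h
      · have hb := hbar t ht ht1; rw [h] at hb; exact hb
      · have hb := hbar t ht ht1
        rw [h, map_neg, map_neg, smul_neg, ← neg_add, norm_neg] at hb
        exact hb
    intro t ht
    rcases le_or_gt t 1 with h1 | h1
    · exact main t ht h1
    · refine claimA (T x₀) (B x₀) 1 1 t one_pos h1.le (le_of_eq hTx₀) ?_
      simpa using main 1 one_pos le_rfl
  intro lam
  rcases lt_trichotomy lam 0 with h | h | h
  · have hBc' : IsCompactOperator ⇑(-A) := by
      rw [ContinuousLinearMap.coe_neg']; exact hAc.neg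
    have horth' : BJOrth T (-A) := by
      intro l
      have hh := horth (-l)
      rwa [neg_smul, ← smul_neg] at hh
    have hp := pos (-A) hBc' horth' (-lam) (by linarith)
    rwa [ContinuousLinearMap.neg_apply, smul_neg, neg_smul, neg_neg] at hp
  · simp [h, hTx₀]
  · exact pos A hAc horth lam h


lemma rankOneCompact (f : X →L[ℝ] ℝ) (y : X) : IsCompactOperator ⇑(f.smulRight y) := by
  refine (isCompactOperator_iff_image_closedBall_subset_compact
    (f.smulRight y : X →ₗ[ℝ] X) (r := 1) one_pos).mpr ⟨(fun c : ℝ => c • y) '' closedBall 0 (‖f‖ + 1),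
    (isCompact_closedBall 0 _).image (by continuity), ?_⟩
  rintro _ ⟨x, hx, rfl⟩
  refine ⟨f x, ?_, rfl⟩
  simp only [mem_closedBall, dist_zero_right] at hx ⊢
  calc ‖f x‖ ≤ ‖f‖ * ‖x‖ := f.le_opNorm x
    _ ≤ ‖f‖ + 1 := by nlinarith [norm_nonneg f]

lemma BJOrth_smul_left {c : ℝ} (hc : c ≠ 0) {x y : X} (h : BJOrth (c • x) y) : BJOrth x y := by
  intro lam
  have h2 := h (c * lam)
  have h3 : ‖c • x‖ ≤ ‖c • (x + lam • y)‖ := by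
    rw [smul_add, ← mul_smul]; exact h2
  rw [norm_smul, norm_smul] at h3
  have hcpos : 0 < ‖c‖ := norm_pos_iff.mpr hc
  exact le_of_mul_le_mul_left h3 hcpos

end SymmAux

end Auxiliary

/-- Let `X` be a reflexive Banach space and `T : X → X` a norm-one compact
operator that is a right-symmetric point of the space of compact operators on `X`, with
`M_T = {x₀, -x₀}`, and left orthogonality preserving at `x₀`. If `x₀` is an eigenvector of `T`,
then `x₀` is both a left-symmetric and a right-symmetric point of `X`. -/

theorem symmetric_of_eigenvector {X : Type*}
    [NormedAddCommGroup X] [NormedSpace ℝ X] [CompleteSpace X]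
    (hX : ReflexiveSpace X)
    (T : X →L[ℝ] X) (hTc : IsCompactOperator T) (hT : ‖T‖ = 1)
    (hrs : RightSymmetricCompactOp T)
    (x₀ : X) (hx₀ : ‖x₀‖ = 1)
    (hMT : {x : X | ‖x‖ = 1 ∧ ‖T x‖ = ‖T‖} = {x₀, -x₀})
    (hop : LeftOPAt T x₀)
    (μ : ℝ) (hμ : T x₀ = μ • x₀) :
    LeftSymmetricPt x₀ ∧ RightSymmetricPt x₀ := by
  classical
  have hx₀mem : x₀ ∈ {x : X | ‖x‖ = 1 ∧ ‖T x‖ = ‖T‖} := by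
    rw [hMT]; exact Set.mem_insert _ _
  have hTx₀ : ‖T x₀‖ = 1 := by rw [hx₀mem.2, hT]
  have hμabs : |μ| = 1 := by
    have h := hTx₀
    rw [hμ, norm_smul, Real.norm_eq_abs, hx₀, mul_one] at h
    exact h
  have hμ0 : μ ≠ 0 := by
    intro h; rw [h] at hμabs; simp at hμabs
  have hx₀ne : x₀ ≠ 0 := fun h => by simp [h] at hx₀
  constructor
  · -- left symmetric point
    intro y hxy
    by_cases hy : y = 0
    · subst hy
      intro lam
      simpa using norm_nonneg _
    obtain ⟨g, hg1, hgy⟩ := exists_dual_vector ℝ y (norm_ne_zero_iff.2 hy)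
    have hgy' : g y = ‖y‖ := hgy
    set A : X →L[ℝ] X := g.smulRight x₀ with hA
    have hAc : IsCompactOperator ⇑A := SymmAux.rankOneCompact g x₀
    have hAnorm : ‖A‖ = 1 := by
      rw [hA, ContinuousLinearMap.norm_smulRight_apply, hg1, hx₀, mul_one]
    have hTxTy : BJOrth (T x₀) (T y) := hop y hxy
    have hx₀Ty : BJOrth x₀ (T y) := by
      rw [hμ] at hTxTy
      exact SymmAux.BJOrth_smul_left hμ0 hTxTy
    have hyn : (0:ℝ) < ‖y‖ := norm_pos_iff.2 hy
    have hAT : BJOrth A T := by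
      intro lam
      set u : X := ‖y‖⁻¹ • y with hu
      have hun : ‖u‖ = 1 := by
        rw [hu, norm_smul, Real.norm_eq_abs, abs_of_pos (by positivity),
          inv_mul_cancel₀ hyn.ne']
      have happ : (A + lam • T) u = x₀ + (lam * ‖y‖⁻¹) • T y := by
        rw [ContinuousLinearMap.add_apply, ContinuousLinearMap.smul_apply, hA,
          ContinuousLinearMap.smulRight_apply, hu, map_smul, map_smul, smul_eq_mul,
          hgy', inv_mul_cancel₀ hyn.ne', one_smul, smul_smul]
      calc ‖A‖ = 1 := hAnorm
        _ ≤ ‖x₀ + (lam * ‖y‖⁻¹) • T y‖ := by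
            have := hx₀Ty (lam * ‖y‖⁻¹); rwa [hx₀] at this
        _ = ‖(A + lam • T) u‖ := by rw [happ]
        _ ≤ ‖A + lam • T‖ * ‖u‖ := ContinuousLinearMap.le_opNorm _ _
        _ = ‖A + lam • T‖ := by rw [hun, mul_one]
    have hTA : BJOrth T A := hrs A hAc hAT
    have hkey := SymmAux.key_prop hX T hTc hT x₀ hMT A hAc hTA
    have hAx₀ : A x₀ = g x₀ • x₀ := by
      rw [hA, ContinuousLinearMap.smulRight_apply]
    have hgx₀ : g x₀ = 0 := by
      by_contra hne
      have hcon := hkey (-μ / g x₀)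
      rw [hμ, hAx₀, smul_smul, ← add_smul, div_mul_cancel₀ _ hne] at hcon
      simp at hcon
      linarith
    intro lam
    calc ‖y‖ = g (y + lam • x₀) := by
          rw [map_add, map_smul, hgx₀, smul_eq_mul, mul_zero, add_zero, hgy']
      _ ≤ |g (y + lam • x₀)| := le_abs_self _
      _ ≤ ‖g‖ * ‖y + lam • x₀‖ := g.le_opNorm _
      _ = ‖y + lam • x₀‖ := by rw [hg1, one_mul]
  · -- right symmetric point
    intro y hyx
    by_cases hy : y = 0
    · subst hy
      intro lam
      simp
    obtain ⟨f, hf1, hfx⟩ := exists_dual_vector ℝ x₀ (norm_ne_zero_iff.2 hx₀ne)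
    have hfx' : f x₀ = ‖x₀‖ := hfx
    have hfx1 : f x₀ = 1 := by rw [hfx', hx₀]
    set A : X →L[ℝ] X := f.smulRight y with hA
    have hAc : IsCompactOperator ⇑A := SymmAux.rankOneCompact f y
    have hAnorm : ‖A‖ = ‖y‖ := by
      rw [hA, ContinuousLinearMap.norm_smulRight_apply, hf1, one_mul]
    have hAx₀ : A x₀ = y := by
      rw [hA, ContinuousLinearMap.smulRight_apply, hfx1, one_smul]
    have hAT : BJOrth A T := by
      intro lam
      have happ : (A + lam • T) x₀ = y + (lam * μ) • x₀ := by
        rw [ContinuousLinearMap.add_apply, ContinuousLinearMap.smul_apply, hμ,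
          smul_smul, hAx₀]
      calc ‖A‖ = ‖y‖ := hAnorm
        _ ≤ ‖y + (lam * μ) • x₀‖ := hyx _
        _ = ‖(A + lam • T) x₀‖ := by rw [happ]
        _ ≤ ‖A + lam • T‖ * ‖x₀‖ := ContinuousLinearMap.le_opNorm _ _
        _ = ‖A + lam • T‖ := by rw [hx₀, mul_one]
    have hTA : BJOrth T A := hrs A hAc hAT
    have hkey := SymmAux.key_prop hX T hTc hT x₀ hMT A hAc hTA
    have hBJ : BJOrth (μ • x₀) y := by
      intro lam
      have hh := hkey lam
      rw [hμ, hAx₀] at hh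
      calc ‖μ • x₀‖ = 1 := by rw [norm_smul, Real.norm_eq_abs, hμabs, hx₀, mul_one]
        _ ≤ ‖μ • x₀ + lam • y‖ := hh
    exact SymmAux.BJOrth_smul_left hμ0 hBJ
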